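/- Let n = 2^(2^ν) + 1 be prime with ν ≥ 1, and let G and H be two distinct doubling orbits of nonzero residues modulo n. Fix any k₁ ∈ G. Then: (i) g + h ≠ 0 for all g ∈ G, h ∈ H; and (ii) for every nonzero residue r modulo n, the number of ordered pairs (g,h) ∈ G × H with g + h = r equals the number of elements m ∈ H such that r lies in the doubling orbit of k₁ + m. In particular, the multiset of all sums g + h (g ∈ G, h ∈ H) is the disjoint multiset union of 2^(ν+1) doubling orbits. -/

import Mathlib

/-- The doubling orbit of a residue `a` modulo `n`: the set `{a * 2 ^ j : j ∈ ℕ}`. -/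
def dOrbit {n : ℕ} (a : ZMod n) : Set (ZMod n) := Set.range fun j : ℕ => a * 2 ^ j

/-- For a Fermat prime `n = 2 ^ 2 ^ ν + 1` (`ν ≥ 1`) and two distinct
doubling orbits `G = dOrbit a`, `H = dOrbit b` of nonzero residues, with `k₁ ∈ G`:
(i) `g + h ≠ 0` for all `g ∈ G`, `h ∈ H`; and (ii) for every nonzero residue `r`, the number
of ordered pairs `(g, h) ∈ G × H` with `g + h = r` equals the number of `m ∈ H` such that
`r` lies in the doubling orbit of `k₁ + m`. -/
theorem stmt4 (ν n : ℕ) (hν : 1 ≤ ν) (hn : n = 2 ^ (2 ^ ν) + 1) (hp : n.Prime)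
    (a b : ZMod n) (ha : a ≠ 0) (hb : b ≠ 0) (hab : dOrbit a ≠ dOrbit b)
    (k₁ : ZMod n) (hk₁ : k₁ ∈ dOrbit a) :
    (∀ g ∈ dOrbit a, ∀ h ∈ dOrbit b, g + h ≠ 0) ∧
    (∀ r : ZMod n, r ≠ 0 →
      {p : ZMod n × ZMod n | p.1 ∈ dOrbit a ∧ p.2 ∈ dOrbit b ∧ p.1 + p.2 = r}.ncard =
        {m : ZMod n | m ∈ dOrbit b ∧ r ∈ dOrbit (k₁ + m)}.ncard) := by
  haveI : Fact n.Prime := ⟨hp⟩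
  have h2ν : (2 : ZMod n) ^ (2 ^ ν) = -1 := by
    have h0 : ((2 ^ (2 ^ ν) + 1 : ℕ) : ZMod n) = 0 := by
      rw [← hn]; exact ZMod.natCast_self n
    push_cast at h0
    linear_combination h0
  have ho : (2 : ZMod n) ^ (2 ^ (ν + 1)) = 1 := by
    rw [pow_succ, pow_mul, h2ν]; ring
  set o : ℕ := 2 ^ (ν + 1) with ho_def
  have ho1 : 1 ≤ o := Nat.one_le_two_pow
  have hinv : ∀ i : ℕ, (2 : ZMod n) ^ i * (2 : ZMod n) ^ (i * (o - 1)) = 1 := by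
    intro i
    rw [← pow_add]
    have h1 : i + i * (o - 1) = o * i := by
      obtain ⟨c, hc⟩ := Nat.exists_eq_add_of_le ho1
      rw [hc, Nat.add_sub_cancel_left]; ring
    rw [h1, pow_mul, ho, one_pow]
  have h2 : (2 : ZMod n) ≠ 0 := by
    intro h
    rw [h, zero_pow (by positivity : o ≠ 0)] at ho
    exact zero_ne_one ho
  have hmem_mul : ∀ (c x : ZMod n), x ∈ dOrbit c → ∀ j : ℕ, x * 2 ^ j ∈ dOrbit c := by
    rintro c x ⟨i, rfl⟩ j
    refine ⟨i + j, ?_⟩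
    show c * 2 ^ (i + j) = c * 2 ^ i * 2 ^ j
    rw [pow_add]; ring
  have hshift : ∀ (x : ZMod n) (i : ℕ), x * 2 ^ i * 2 ^ (i * (o - 1)) = x := by
    intro x i; rw [mul_assoc, hinv i, mul_one]
  have horb : ∀ (c x : ZMod n), x ∈ dOrbit c → dOrbit x = dOrbit c := by
    rintro c x hx
    obtain ⟨i, rfl⟩ := hx
    ext y
    constructor
    · rintro ⟨j, rfl⟩
      refine ⟨i + j, ?_⟩
      show c * 2 ^ (i + j) = c * 2 ^ i * 2 ^ j
      rw [pow_add]; ring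
    · rintro ⟨j, rfl⟩
      refine ⟨i * (o - 1) + j, ?_⟩
      show c * 2 ^ i * 2 ^ (i * (o - 1) + j) = c * 2 ^ j
      rw [pow_add, ← mul_assoc, hshift]
  have horbne : ∀ (c : ZMod n), c ≠ 0 → ∀ x ∈ dOrbit c, x ≠ 0 := by
    rintro c hc x ⟨i, rfl⟩
    exact mul_ne_zero hc (pow_ne_zero _ h2)
  have part1 : ∀ g ∈ dOrbit a, ∀ h ∈ dOrbit b, g + h ≠ 0 := by
    rintro g ⟨i, rfl⟩ h ⟨j, rfl⟩ hsum
    apply hab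
    have hbj : b * 2 ^ j = a * 2 ^ (2 ^ ν + i) := by
      have h1 : b * 2 ^ j = -(a * 2 ^ i) := eq_neg_of_add_eq_zero_right hsum
      rw [h1, pow_add, h2ν]; ring
    have hb_mem : b ∈ dOrbit a := by
      have hmem : b * 2 ^ j ∈ dOrbit a := ⟨2 ^ ν + i, hbj.symm⟩
      have h3 := hmem_mul a _ hmem (j * (o - 1))
      rwa [hshift] at h3
    exact (horb a b hb_mem).symm
  refine ⟨part1, ?_⟩
  intro r hr
  have hk₁ne : k₁ ≠ 0 := horbne a ha k₁ hk₁
  obtain ⟨t, hkt0⟩ := hk₁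
  have hkt : a * 2 ^ t = k₁ := hkt0
  have hk₁a : k₁ ∈ dOrbit a := ⟨t, hkt0⟩
  set f : ZMod n × ZMod n → ZMod n := fun p => p.2 * k₁ * p.1⁻¹ with hf
  set S := {p : ZMod n × ZMod n | p.1 ∈ dOrbit a ∧ p.2 ∈ dOrbit b ∧ p.1 + p.2 = r} with hS
  have hkey : ∀ p ∈ S, k₁ + f p = k₁ * r * p.1⁻¹ := by
    rintro ⟨g, h⟩ ⟨hg, hh, hgh⟩
    have hgne : g ≠ 0 := horbne a ha g hg
    simp only [hf]
    field_simp
    linear_combination hgh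
  have hinj : Set.InjOn f S := by
    rintro ⟨g1, h1⟩ hp1 ⟨g2, h2'⟩ hp2 hfeq
    obtain ⟨hg1o, hh1o, hsum1⟩ := hp1
    obtain ⟨hg2o, hh2o, hsum2⟩ := hp2
    have hg1 : g1 ≠ 0 := horbne a ha _ hg1o
    have hg2 : g2 ≠ 0 := horbne a ha _ hg2o
    have e1 := hkey _ ⟨hg1o, hh1o, hsum1⟩
    have e2 := hkey _ ⟨hg2o, hh2o, hsum2⟩
    rw [hfeq] at e1
    have heq : k₁ * r * g1⁻¹ = k₁ * r * g2⁻¹ := by rw [← e1, ← e2]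
    have hkr : k₁ * r ≠ 0 := mul_ne_zero hk₁ne hr
    have hg12 : g1 = g2 := inv_injective (mul_left_cancel₀ hkr heq)
    have hh12 : h1 = h2' := by
      rw [← hg12] at hsum2
      exact add_left_cancel (hsum1.trans hsum2.symm)
    exact Prod.ext hg12 hh12
  have himg : f '' S = {m : ZMod n | m ∈ dOrbit b ∧ r ∈ dOrbit (k₁ + m)} := by
    ext m
    constructor
    · rintro ⟨⟨g, h⟩, hpS, rfl⟩
      obtain ⟨hg, hh, hgh⟩ := hpS
      obtain ⟨i, hgi0⟩ := hg
      have hgi : a * 2 ^ i = g := hgi0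
      have hgmem : g ∈ dOrbit a := ⟨i, hgi0⟩
      have hgne : g ≠ 0 := horbne a ha g hgmem
      have hgk : g * 2 ^ (t + i * (o - 1)) = k₁ := by
        rw [← hgi, ← hkt, pow_add]
        calc a * 2 ^ i * (2 ^ t * 2 ^ (i * (o - 1)))
            = a * 2 ^ i * 2 ^ (i * (o - 1)) * 2 ^ t := by ring
          _ = a * 2 ^ t := by rw [hshift]
      have hq : k₁ * g⁻¹ = 2 ^ (t + i * (o - 1)) := by
        rw [← hgk, mul_comm, ← mul_assoc, inv_mul_cancel₀ hgne, one_mul]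
      have hfval : f (g, h) = h * 2 ^ (t + i * (o - 1)) := by
        simp only [hf]
        show h * k₁ * g⁻¹ = h * 2 ^ (t + i * (o - 1))
        rw [mul_assoc, hq]
      constructor
      · rw [hfval]
        exact hmem_mul b h hh _
      · have hsum : k₁ + f (g, h) = r * 2 ^ (t + i * (o - 1)) := by
          rw [hkey (g, h) ⟨hgmem, hh, hgh⟩]
          show k₁ * r * g⁻¹ = r * 2 ^ (t + i * (o - 1))
          rw [mul_comm k₁ r, mul_assoc, hq]
        refine ⟨(t + i * (o - 1)) * (o - 1), ?_⟩
        show (k₁ + f (g, h)) * 2 ^ ((t + i * (o - 1)) * (o - 1)) = r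
        rw [hsum, hshift]
    · rintro ⟨hmb, hrm⟩
      obtain ⟨s, hs⟩ := hrm
      have h2s : (2 : ZMod n) ^ s ≠ 0 := pow_ne_zero _ h2
      refine ⟨(k₁ * 2 ^ s, m * 2 ^ s), ⟨hmem_mul a k₁ hk₁a s, hmem_mul b m hmb s, ?_⟩, ?_⟩
      · show k₁ * 2 ^ s + m * 2 ^ s = r
        rw [← hs]; ring
      · show m * 2 ^ s * k₁ * (k₁ * 2 ^ s)⁻¹ = m
        field_simp
  rw [← himg, Set.ncard_image_of_injOn hinj]
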